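/- arXiv:1901.04043 — 3 statements merged into one kernel-verified Lean document; each statement's English description precedes it below -/
import Mathlib

section
/- Let E be an Archimedean f-algebra with order completion E^δ, where the multiplication extends to E^δ. A net (x_α) in E mo-converges to 0 in E if and only if it mo-converges to 0 in E^δ. -/
universe u v w

/-- A (not necessarily unital) `f`-algebra: a vector lattice over `ℝ` with an associative
multiplication such that products of positive elements are positive and `x ⊓ y = 0` implies
`(x*z) ⊓ y = (z*x) ⊓ y = 0` for every positive `z`. -/
class FAlgebra (E : Type u) extends Lattice E, NonUnitalRing E, Module ℝ E where
  add_le_add_left' : ∀ a b : E, a ≤ b → ∀ c : E, c + a ≤ c + b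
  smul_nonneg' : ∀ (r : ℝ) (x : E), 0 ≤ r → 0 ≤ x → 0 ≤ r • x
  mul_nonneg' : ∀ x y : E, 0 ≤ x → 0 ≤ y → 0 ≤ x * y
  f_inf : ∀ x y z : E, x ⊓ y = 0 → 0 ≤ z → (x * z) ⊓ y = 0 ∧ (z * x) ⊓ y = 0

variable {E : Type u}

/-- Order convergence of a net `x` to `l`: there is a net `y` on some directed index set,
decreasing with infimum `0`, eventually dominating `|x a - l|`. -/
def OrderConvTo [Lattice E] [AddCommGroup E] {ι : Type v} [Preorder ι]
    (x : ι → E) (l : E) : Prop :=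
  ∃ (κ : Type u) (P : Preorder κ) (y : κ → E),
    Nonempty κ ∧
    (∀ a b : κ, ∃ c : κ, P.le a c ∧ P.le b c) ∧
    (∀ a b : κ, P.le a b → y b ≤ y a) ∧
    IsGLB (Set.range y) 0 ∧
    (∀ b : κ, ∃ a₀ : ι, ∀ a : ι, a₀ ≤ a → |x a - l| ≤ y b)

/-- Multiplicative order (mo-) convergence in an `f`-algebra:
`|x_α - l| * u` order converges to `0` for every positive `u`. -/
def MOConvTo [FAlgebra E] {ι : Type v} [Preorder ι] (x : ι → E) (l : E) : Prop :=
  ∀ u : E, 0 ≤ u → OrderConvTo (fun a => |x a - l| * u) 0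

/-- An `f`-algebra is infinite distributive if multiplication by a positive element
preserves existing infima of sets of positive elements. -/
def InfDistrib (E : Type u) [FAlgebra E] : Prop :=
  ∀ A : Set E, (∀ a ∈ A, (0 : E) ≤ a) → ∀ m : E, IsGLB A m →
    ∀ u : E, 0 ≤ u → IsGLB ((fun a => u * a) '' A) (u * m)

/-- Archimedean property: `(1/n)x ↓ 0` for every positive `x`. -/
def ArchimedeanVL (E : Type u) [FAlgebra E] : Prop :=
  ∀ x : E, 0 ≤ x → IsGLB (Set.range fun n : ℕ => ((n : ℝ) + 1)⁻¹ • x) 0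

/-- A multiplicative unit. -/
def IsMulUnit [FAlgebra E] (e : E) : Prop := ∀ x : E, e * x = x ∧ x * e = x

/-- Order convergence relative to a sublattice-subspace `S` of `E`: the dominating
decreasing net lies in `S` and its infimum computed within `S` is `0`. -/
def OrderConvToIn [FAlgebra E] (S : Set E) {ι : Type v} [Preorder ι]
    (x : ι → E) (l : E) : Prop :=
  ∃ (κ : Type u) (P : Preorder κ) (y : κ → E),
    Nonempty κ ∧
    (∀ a b : κ, ∃ c : κ, P.le a c ∧ P.le b c) ∧
    (∀ b : κ, y b ∈ S) ∧
    (∀ a b : κ, P.le a b → y b ≤ y a) ∧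
    (∀ b : κ, 0 ≤ y b) ∧
    (∀ z ∈ S, (∀ b : κ, z ≤ y b) → z ≤ 0) ∧
    (∀ b : κ, ∃ a₀ : ι, ∀ a : ι, a₀ ≤ a → |x a - l| ≤ y b)

/-- mo-convergence computed within a sub-`f`-algebra `S` of `E`. -/
def MOConvToIn [FAlgebra E] (S : Set E) {ι : Type v} [Preorder ι]
    (x : ι → E) (l : E) : Prop :=
  ∀ u ∈ S, 0 ≤ u → OrderConvToIn S (fun a => |x a - l| * u) 0

/-- A sub-`f`-algebra (as a set): a vector-sublattice closed under multiplication. -/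
def IsSubFAlgebra [FAlgebra E] (Y : Set E) : Prop :=
  (0 : E) ∈ Y ∧ (∀ x ∈ Y, ∀ y ∈ Y, x + y ∈ Y) ∧ (∀ r : ℝ, ∀ x ∈ Y, r • x ∈ Y) ∧
  (∀ x ∈ Y, -x ∈ Y) ∧ (∀ x ∈ Y, ∀ y ∈ Y, x * y ∈ Y) ∧ (∀ x ∈ Y, ∀ y ∈ Y, x ⊔ y ∈ Y)

/-- An order ideal (solid subspace). -/
def IsOrderIdeal [FAlgebra E] (I : Set E) : Prop :=
  (0 : E) ∈ I ∧ (∀ x ∈ I, ∀ y ∈ I, x + y ∈ I) ∧ (∀ r : ℝ, ∀ x ∈ I, r • x ∈ I) ∧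
  (∀ x y : E, |x| ≤ |y| → y ∈ I → x ∈ I)

/-- mo-KB-space: every order bounded increasing net of positive elements is mo-convergent. -/
def MOKB (E : Type u) [FAlgebra E] : Prop :=
  ∀ (ι : Type u) (P : Preorder ι), Nonempty ι →
    (∀ a b : ι, ∃ c : ι, P.le a c ∧ P.le b c) →
    ∀ x : ι → E, (∀ a b : ι, P.le a b → x a ≤ x b) → (∀ a, 0 ≤ x a) →
      (∃ z : E, ∀ a, x a ≤ z) → ∃ l : E, @MOConvTo E _ ι P x l

/-- mo-continuity: every net order converging to `0` mo-converges to `0`. -/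
def MOContinuous (E : Type u) [FAlgebra E] : Prop :=
  ∀ (ι : Type u) (P : Preorder ι), Nonempty ι →
    (∀ a b : ι, ∃ c : ι, P.le a c ∧ P.le b c) →
    ∀ x : ι → E, @OrderConvTo E _ _ ι P x 0 → @MOConvTo E _ ι P x 0

/-- Order (Dedekind) completeness. -/
def OrderCompleteVL (E : Type u) [FAlgebra E] : Prop :=
  ∀ A : Set E, A.Nonempty → BddAbove A → ∃ m : E, IsLUB A m

section Stmt8Aux

instance (priority := 100) FAlgebra.toAddLeftMono (E : Type u) [FAlgebra E] :
    CovariantClass E E (· + ·) (· ≤ ·) :=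
  ⟨fun c a b h => FAlgebra.add_le_add_left' a b h c⟩

instance (priority := 100) FAlgebra.toAddRightMono (E : Type u) [FAlgebra E] :
    CovariantClass E E (Function.swap (· + ·)) (· ≤ ·) :=
  ⟨fun c a b h => by simpa [add_comm] using FAlgebra.add_le_add_left' a b h c⟩

variable {E : Type u} {F : Type u} [FAlgebra E] [FAlgebra F] {f : E → F}

theorem stmt8aux.mul_le_mul_left {x a b : E} (hx : 0 ≤ x) (h : a ≤ b) : x * a ≤ x * b := by
  have h1 : (0 : E) ≤ x * (b - a) :=
    FAlgebra.mul_nonneg' x (b - a) hx (sub_nonneg.mpr h)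
  rw [mul_sub] at h1
  exact sub_nonneg.mp h1

theorem stmt8aux.mono (hsup : ∀ a b : E, f (a ⊔ b) = f a ⊔ f b) {a b : E}
    (h : a ≤ b) : f a ≤ f b := by
  have h1 : f a ⊔ f b = f b := by rw [← hsup, sup_eq_right.mpr h]
  exact sup_eq_right.mp h1

theorem stmt8aux.refl (hinj : Function.Injective f)
    (hsup : ∀ a b : E, f (a ⊔ b) = f a ⊔ f b) {a b : E}
    (h : f a ≤ f b) : a ≤ b := by
  have h1 : f (a ⊔ b) = f b := by rw [hsup]; exact sup_eq_right.mpr h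
  exact sup_eq_right.mp (hinj h1)

theorem stmt8aux.map_zero (hadd : ∀ a b : E, f (a + b) = f a + f b) : f 0 = 0 := by
  have h1 := hadd 0 0
  rw [add_zero] at h1
  exact (left_eq_add.mp h1).symm ▸ rfl

theorem stmt8aux.map_neg (hadd : ∀ a b : E, f (a + b) = f a + f b) (a : E) :
    f (-a) = -f a := by
  have h1 : f (-a) + f a = 0 := by
    rw [← hadd, neg_add_cancel, stmt8aux.map_zero hadd]
  exact eq_neg_of_add_eq_zero_left h1

theorem stmt8aux.map_sub (hadd : ∀ a b : E, f (a + b) = f a + f b) (a b : E) :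
    f (a - b) = f a - f b := by
  rw [sub_eq_add_neg, hadd, stmt8aux.map_neg hadd, sub_eq_add_neg]

theorem stmt8aux.map_inf (hadd : ∀ a b : E, f (a + b) = f a + f b)
    (hsup : ∀ a b : E, f (a ⊔ b) = f a ⊔ f b) (a b : E) :
    f (a ⊓ b) = f a ⊓ f b := by
  have h1 : a ⊓ b = -(-a ⊔ -b) := by rw [neg_sup, neg_neg, neg_neg]
  rw [h1, stmt8aux.map_neg hadd, hsup, stmt8aux.map_neg hadd, stmt8aux.map_neg hadd,
    neg_sup, neg_neg, neg_neg]

theorem stmt8aux.map_abs (hadd : ∀ a b : E, f (a + b) = f a + f b)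
    (hsup : ∀ a b : E, f (a ⊔ b) = f a ⊔ f b) (a : E) :
    f |a| = |f a| := by
  show f (a ⊔ -a) = f a ⊔ -f a
  rw [hsup, stmt8aux.map_neg hadd]

/-- Transfer of `IsGLB … 0` from `E` to `F` along an order-dense embedding. -/
theorem stmt8aux.glb_image (hinj : Function.Injective f)
    (hadd : ∀ a b : E, f (a + b) = f a + f b)
    (hsup : ∀ a b : E, f (a ⊔ b) = f a ⊔ f b)
    (hdense : ∀ z : F, 0 < z → ∃ a : E, 0 < f a ∧ f a ≤ z)
    {S : Set E} (h : IsGLB S 0) : IsGLB (f '' S) 0 := by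
  constructor
  · rintro _ ⟨s, hsS, rfl⟩
    have h0 := stmt8aux.mono hsup (h.1 hsS)
    rwa [stmt8aux.map_zero hadd] at h0
  · intro z hz
    by_contra hc
    have hlt : (0 : F) < z ⊔ 0 :=
      lt_of_le_of_ne le_sup_right (fun hh => hc (sup_eq_right.mp hh.symm))
    obtain ⟨a, ha0, haz⟩ := hdense _ hlt
    have halow : a ∈ lowerBounds S := by
      intro s hsS
      have hfs0 : (0 : F) ≤ f s := by
        have := stmt8aux.mono hsup (h.1 hsS)
        rwa [stmt8aux.map_zero hadd] at this
      have h1 : z ⊔ 0 ≤ f s := sup_le (hz ⟨s, hsS, rfl⟩) hfs0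
      exact stmt8aux.refl hinj hsup (le_trans haz h1)
    have h2 : a ≤ 0 := h.2 halow
    have h3 : f a ≤ 0 := by
      have := stmt8aux.mono hsup h2
      rwa [stmt8aux.map_zero hadd] at this
    exact absurd h3 (fun hh => lt_irrefl _ (lt_of_lt_of_le ha0 hh))

/-- If `f w` lies below every `f e` dominating `z`, then `f w ≤ z`
(order density + majorization + order completeness of `F`). -/
theorem stmt8aux.le_of_le_dominators (hF : OrderCompleteVL F)
    (hinj : Function.Injective f)
    (hadd : ∀ a b : E, f (a + b) = f a + f b)
    (hsup : ∀ a b : E, f (a ⊔ b) = f a ⊔ f b)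
    (hdense : ∀ z : F, 0 < z → ∃ a : E, 0 < f a ∧ f a ≤ z)
    (hmaj : ∀ z : F, ∃ a : E, z ≤ f a)
    {w : E} {z : F} (hw : ∀ e : E, z ≤ f e → f w ≤ f e) : f w ≤ z := by
  by_contra hc
  have hlt : z < f w ⊔ z :=
    lt_of_le_of_ne le_sup_right (fun hh => hc (sup_eq_right.mp hh.symm))
  have hd : (0 : F) < f w ⊔ z - z := sub_pos.mpr hlt
  obtain ⟨a, ha0, had⟩ := hdense _ hd
  have key : ∀ n : ℕ, ∀ e : E, z ≤ f e → z + n • f a ≤ f e := by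
    intro n
    induction n with
    | zero => intro e he; simpa using he
    | succ n ih =>
      intro e he
      have hsub : z ≤ f (e - a) := by
        rw [stmt8aux.map_sub hadd]
        have h1 : f a ≤ f e - z := by
          refine le_trans had ?_
          have h2 : f w ⊔ z ≤ f e := sup_le (hw e he) he
          exact sub_le_sub_right h2 z
        exact le_sub_comm.mp h1
      have h3 := ih (e - a) hsub
      rw [stmt8aux.map_sub hadd] at h3
      have h4 : z + n • f a + f a ≤ f e := by
        have := add_le_add h3 (le_refl (f a))
        rwa [sub_add_cancel] at this
      calc z + (n + 1) • f a = z + n • f a + f a := by rw [succ_nsmul]; abel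
        _ ≤ f e := h4
  obtain ⟨e0, he0⟩ := hmaj z
  have hbdd : BddAbove (Set.range fun n : ℕ => n • f a) := by
    refine ⟨f e0 - z, ?_⟩
    rintro _ ⟨n, rfl⟩
    exact le_sub_iff_add_le'.mpr (key n e0 he0)
  obtain ⟨s, hs⟩ := hF (Set.range fun n : ℕ => n • f a) ⟨_, ⟨0, rfl⟩⟩ hbdd
  have h1 : ∀ n : ℕ, n • f a ≤ s - f a := by
    intro n
    have h5 : (n + 1) • f a ≤ s := hs.1 ⟨n + 1, rfl⟩
    rw [succ_nsmul] at h5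
    exact le_sub_iff_add_le.mpr h5
  have h6 : s ≤ s - f a := hs.2 (by rintro _ ⟨n, rfl⟩; exact h1 n)
  have h7 : s + f a ≤ s := le_sub_iff_add_le.mp h6
  exact absurd ((add_le_iff_nonpos_right s).mp h7) (fun hh => lt_irrefl _ (lt_of_lt_of_le ha0 hh))

end Stmt8Aux

/-- a net in `E` mo-converges to `0` in `E` iff it mo-converges to `0`
in the order completion `E^δ` (here `F`, with `f : E → F` the embedding). -/
theorem stmt8 {E : Type u} [FAlgebra E] {F : Type u} [FAlgebra F]
    (hF : OrderCompleteVL F) (f : E → F)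
    (hinj : Function.Injective f)
    (hadd : ∀ a b : E, f (a + b) = f a + f b)
    (hsmul : ∀ (r : ℝ) (a : E), f (r • a) = r • f a)
    (hmul : ∀ a b : E, f (a * b) = f a * f b)
    (hsup : ∀ a b : E, f (a ⊔ b) = f a ⊔ f b)
    (hdense : ∀ z : F, 0 < z → ∃ a : E, 0 < f a ∧ f a ≤ z)
    (hmaj : ∀ z : F, ∃ a : E, z ≤ f a)
    {ι : Type u} [Preorder ι] (hne : Nonempty ι)
    (hdir : ∀ a b : ι, ∃ c : ι, a ≤ c ∧ b ≤ c) (x : ι → E) :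
    MOConvTo x (0 : E) ↔ MOConvTo (fun a => f (x a)) (0 : F) :=  by
  have hf0 : f 0 = 0 := stmt8aux.map_zero hadd
  constructor
  · -- E ⟹ F
    intro h u' hu'
    obtain ⟨u, hu⟩ := hmaj u'
    have hu0 : (0 : E) ≤ u :=
      stmt8aux.refl hinj hsup (by rw [hf0]; exact le_trans hu' hu)
    obtain ⟨κ, P, y, hκne, hκdir, hdec, hglb, hdom⟩ := h u hu0
    refine ⟨κ, P, fun b => f (y b), hκne, hκdir,
      fun a b hab => stmt8aux.mono hsup (hdec a b hab), ?_, ?_⟩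
    · have hr : (Set.range fun b => f (y b)) = f '' Set.range y := Set.range_comp f y
      rw [hr]
      exact stmt8aux.glb_image hinj hadd hsup hdense hglb
    · intro b
      obtain ⟨a₀, ha₀⟩ := hdom b
      refine ⟨a₀, fun a ha => ?_⟩
      have h1 := ha₀ a ha
      simp only [sub_zero] at h1 ⊢
      have hxu : (0 : E) ≤ |x a| * u := FAlgebra.mul_nonneg' _ _ (abs_nonneg _) hu0
      rw [abs_of_nonneg hxu] at h1
      have hp : (0 : F) ≤ |f (x a)| * u' := FAlgebra.mul_nonneg' _ _ (abs_nonneg _) hu'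
      rw [abs_of_nonneg hp]
      calc |f (x a)| * u' ≤ |f (x a)| * f u := stmt8aux.mul_le_mul_left (abs_nonneg _) hu
        _ = f |x a| * f u := by rw [stmt8aux.map_abs hadd hsup]
        _ = f (|x a| * u) := (hmul _ _).symm
        _ ≤ f (y b) := stmt8aux.mono hsup h1
  · -- F ⟹ E
    intro h u hu0
    have hfu : (0 : F) ≤ f u := by
      have := stmt8aux.mono hsup hu0
      rwa [hf0] at this
    obtain ⟨κ, P, y, hκne, hκdir, hdec, hglb, hdom⟩ := h (f u) hfu
    have hy0 : ∀ b : κ, (0 : F) ≤ y b := fun b => hglb.1 ⟨b, rfl⟩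
    refine ⟨{p : κ × E // y p.1 ≤ f p.2},
      { le := fun p q => P.le p.val.1 q.val.1 ∧ q.val.2 ≤ p.val.2,
        lt := fun p q => (P.le p.val.1 q.val.1 ∧ q.val.2 ≤ p.val.2) ∧
          ¬(P.le q.val.1 p.val.1 ∧ p.val.2 ≤ q.val.2),
        lt_iff_le_not_ge := fun _ _ => Iff.rfl,
        le_refl := fun p => ⟨P.le_refl _, le_refl _⟩,
        le_trans := fun p q r h1 h2 => ⟨P.le_trans _ _ _ h1.1 h2.1, le_trans h2.2 h1.2⟩ },
      fun p => p.val.2, ?_, ?_, ?_, ?_, ?_⟩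
    · obtain ⟨b0⟩ := hκne
      obtain ⟨e, he⟩ := hmaj (y b0)
      exact ⟨⟨(b0, e), he⟩⟩
    · intro p q
      obtain ⟨c, hc1, hc2⟩ := hκdir p.val.1 q.val.1
      have hinf : y c ≤ f (p.val.2 ⊓ q.val.2) := by
        rw [stmt8aux.map_inf hadd hsup]
        exact le_inf (le_trans (hdec _ _ hc1) p.prop) (le_trans (hdec _ _ hc2) q.prop)
      exact ⟨⟨(c, p.val.2 ⊓ q.val.2), hinf⟩, ⟨hc1, inf_le_left⟩, ⟨hc2, inf_le_right⟩⟩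
    · exact fun p q hpq => hpq.2
    · constructor
      · rintro _ ⟨p, rfl⟩
        exact stmt8aux.refl hinj hsup
          (by rw [hf0]; exact le_trans (hy0 p.val.1) p.prop)
      · intro w hw
        have hwy : ∀ b : κ, f w ≤ y b := by
          intro b
          refine stmt8aux.le_of_le_dominators hF hinj hadd hsup hdense hmaj ?_
          intro e he
          exact stmt8aux.mono hsup (hw ⟨⟨(b, e), he⟩, rfl⟩)
        have hw0 : f w ≤ 0 := hglb.2 (by rintro _ ⟨b, rfl⟩; exact hwy b)
        exact stmt8aux.refl hinj hsup (by rwa [hf0])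
    · intro p
      obtain ⟨a₀, ha₀⟩ := hdom p.val.1
      refine ⟨a₀, fun a ha => ?_⟩
      have h1 := ha₀ a ha
      simp only [sub_zero] at h1 ⊢
      have hp1 : (0 : F) ≤ |f (x a)| * f u := FAlgebra.mul_nonneg' _ _ (abs_nonneg _) hfu
      rw [abs_of_nonneg hp1] at h1
      have hq1 : (0 : E) ≤ |x a| * u := FAlgebra.mul_nonneg' _ _ (abs_nonneg _) hu0
      rw [abs_of_nonneg hq1]
      refine stmt8aux.refl hinj hsup ?_
      calc f (|x a| * u) = |f (x a)| * f u := by rw [hmul, stmt8aux.map_abs hadd hsup]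
        _ ≤ y p.val.1 := h1
        _ ≤ f p.val.2 := p.prop
end

section
/- Let E be an infinite distributive f-algebra in which every positive element can be written as a product of two positive elements. If x_α mo-converges to x and y_β mo-converges to y, then the net (x_α y_β) (indexed by the product directed set) mo-converges to xy. -/
universe u v w

variable {E : Type u}

section Helpers
variable {E : Type u} [FAlgebra E]

instance : CovariantClass E E (· + ·) (· ≤ ·) :=
  ⟨fun c a b h => FAlgebra.add_le_add_left' a b h c⟩

instance : CovariantClass E E (Function.swap (· + ·)) (· ≤ ·) :=
  ⟨fun c a b h => by
    simpa [Function.swap, add_comm] using FAlgebra.add_le_add_left' a b h c⟩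

lemma fmul_nonneg {x y : E} (hx : 0 ≤ x) (hy : 0 ≤ y) : 0 ≤ x * y :=
  FAlgebra.mul_nonneg' x y hx hy

lemma fmul_le_left {a b : E} (h : a ≤ b) {c : E} (hc : 0 ≤ c) : c * a ≤ c * b := by
  have := fmul_nonneg hc (sub_nonneg.2 h)
  rwa [mul_sub, sub_nonneg] at this

lemma fmul_le_right {a b : E} (h : a ≤ b) {c : E} (hc : 0 ≤ c) : a * c ≤ b * c := by
  have := fmul_nonneg (sub_nonneg.2 h) hc
  rwa [sub_mul, sub_nonneg] at this

lemma fabs_mul_le (a b : E) : |a * b| ≤ |a| * |b| := by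
  have ha : a⁺ - a⁻ = a := posPart_sub_negPart a
  have ha' : a⁺ + a⁻ = |a| := posPart_add_negPart a
  have hb : b⁺ - b⁻ = b := posPart_sub_negPart b
  have hb' : b⁺ + b⁻ = |b| := posPart_add_negPart b
  have h1 : a * b ≤ |a| * |b| := by
    have e : (a⁺ + a⁻) * (b⁺ + b⁻) - (a⁺ - a⁻) * (b⁺ - b⁻)
        = (a⁺ * b⁻ + a⁻ * b⁺) + (a⁺ * b⁻ + a⁻ * b⁺) := by noncomm_ring
    rw [ha', hb', ha, hb] at e
    rw [← sub_nonneg, e]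
    have h := add_nonneg (fmul_nonneg (posPart_nonneg a) (negPart_nonneg b))
      (fmul_nonneg (negPart_nonneg a) (posPart_nonneg b))
    exact add_nonneg h h
  have h2 : -(a * b) ≤ |a| * |b| := by
    have e : (a⁺ + a⁻) * (b⁺ + b⁻) - -((a⁺ - a⁻) * (b⁺ - b⁻))
        = (a⁺ * b⁺ + a⁻ * b⁻) + (a⁺ * b⁺ + a⁻ * b⁻) := by noncomm_ring
    rw [ha', hb', ha, hb] at e
    rw [← sub_nonneg, e]
    have h := add_nonneg (fmul_nonneg (posPart_nonneg a) (posPart_nonneg b))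
      (fmul_nonneg (negPart_nonneg a) (negPart_nonneg b))
    exact add_nonneg h h
  exact sup_le h1 h2


end Helpers

/-- in an infinite distributive `f`-algebra in which every positive element
is a product of two positive elements, products of mo-convergent nets mo-converge. -/
theorem stmt9 {E : Type u} [FAlgebra E] (hd : InfDistrib E)
    (hfact : ∀ u : E, 0 ≤ u → ∃ v w : E, 0 ≤ v ∧ 0 ≤ w ∧ u = v * w)
    {ι : Type v} [Preorder ι] (hneι : Nonempty ι)
    (hdirι : ∀ a b : ι, ∃ c : ι, a ≤ c ∧ b ≤ c)
    {κ : Type w} [Preorder κ] (hneκ : Nonempty κ)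
    (hdirκ : ∀ a b : κ, ∃ c : κ, a ≤ c ∧ b ≤ c)
    (x : ι → E) (y : κ → E) (lx ly : E)
    (hx : MOConvTo x lx) (hy : MOConvTo y ly) :
    MOConvTo (fun p : ι × κ => x p.1 * y p.2) (lx * ly) := by
  intro u hu
  obtain ⟨v, w, hv, hw, huvw⟩ := hfact u hu
  obtain ⟨κ1, P1, t1, hne1, hdir1, hmono1, hglb1, hev1⟩ :=
    hx (|ly| * u) (fmul_nonneg (abs_nonneg ly) hu)
  obtain ⟨κ2, P2, z2, hne2, hdir2, hmono2, hglb2, hev2⟩ := hy u hu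
  obtain ⟨κ0, P0, z0, hne0, hdir0, hmono0, hglb0, hev0⟩ := hy v hv
  obtain ⟨γ0⟩ := hne0
  obtain ⟨β0, hβ0⟩ := hev0 γ0
  have hz0pos : (0 : E) ≤ z0 γ0 := hglb0.1 (Set.mem_range_self γ0)
  have hc : (0 : E) ≤ z0 γ0 * w := fmul_nonneg hz0pos hw
  obtain ⟨κ3, P3, t3, hne3, hdir3, hmono3, hglb3, hev3⟩ := hx (z0 γ0 * w) hc
  have hz2pos : ∀ b, (0 : E) ≤ z2 b := fun b => hglb2.1 (Set.mem_range_self b)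
  set t2 : κ2 → E := fun b => |lx| * z2 b with ht2
  have hglb2' : IsGLB (Set.range t2) 0 := by
    have h := hd (Set.range z2) (by rintro a ⟨b, rfl⟩; exact hz2pos b) 0 hglb2
      |lx| (abs_nonneg lx)
    rw [mul_zero] at h
    have him : (fun a => |lx| * a) '' Set.range z2 = Set.range t2 := by
      rw [← Set.range_comp]; rfl
    rwa [him] at h
  refine ⟨κ1 × κ2 × κ3,
    { le := fun p q => P1.le p.1 q.1 ∧ P2.le p.2.1 q.2.1 ∧ P3.le p.2.2 q.2.2
      le_refl := fun p => ⟨P1.le_refl _, P2.le_refl _, P3.le_refl _⟩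
      le_trans := fun p q r h h' => ⟨P1.le_trans _ _ _ h.1 h'.1,
        P2.le_trans _ _ _ h.2.1 h'.2.1, P3.le_trans _ _ _ h.2.2 h'.2.2⟩ },
    fun p => t1 p.1 + (t2 p.2.1 + t3 p.2.2), ?_, ?_, ?_, ?_, ?_⟩
  · obtain ⟨c1⟩ := hne1; obtain ⟨c2⟩ := hne2; obtain ⟨c3⟩ := hne3
    exact ⟨⟨c1, c2, c3⟩⟩
  · rintro ⟨a1, a2, a3⟩ ⟨b1, b2, b3⟩
    obtain ⟨c1, h11, h12⟩ := hdir1 a1 b1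
    obtain ⟨c2, h21, h22⟩ := hdir2 a2 b2
    obtain ⟨c3, h31, h32⟩ := hdir3 a3 b3
    exact ⟨⟨c1, c2, c3⟩, ⟨h11, h21, h31⟩, ⟨h12, h22, h32⟩⟩
  · rintro ⟨a1, a2, a3⟩ ⟨b1, b2, b3⟩ ⟨h1, h2, h3⟩
    exact add_le_add (hmono1 _ _ h1)
      (add_le_add (fmul_le_left (hmono2 _ _ h2) (abs_nonneg lx)) (hmono3 _ _ h3))
  · constructor
    · rintro e ⟨⟨b1, b2, b3⟩, rfl⟩
      exact add_nonneg (hglb1.1 (Set.mem_range_self b1))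
        (add_nonneg (fmul_nonneg (abs_nonneg lx) (hz2pos b2))
          (hglb3.1 (Set.mem_range_self b3)))
    · intro z hz
      have hzall : ∀ b1 b2 b3, z ≤ t1 b1 + (t2 b2 + t3 b3) := fun b1 b2 b3 =>
        hz ⟨(b1, b2, b3), rfl⟩
      have step1 : ∀ b2 b3, z ≤ t2 b2 + t3 b3 := by
        intro b2 b3
        have hlb : z - (t2 b2 + t3 b3) ∈ lowerBounds (Set.range t1) := by
          rintro e ⟨b1, rfl⟩
          exact sub_le_iff_le_add.2 (hzall b1 b2 b3)
        have := hglb1.2 hlb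
        rwa [sub_nonpos] at this
      have step2 : ∀ b3, z ≤ t3 b3 := by
        intro b3
        have hlb : z - t3 b3 ∈ lowerBounds (Set.range t2) := by
          rintro e ⟨b2, rfl⟩
          exact sub_le_iff_le_add.2 (step1 b2 b3)
        have := hglb2'.2 hlb
        rwa [sub_nonpos] at this
      have hlb : z ∈ lowerBounds (Set.range t3) := by
        rintro e ⟨b3, rfl⟩; exact step2 b3
      exact hglb3.2 hlb
  · rintro ⟨b1, b2, b3⟩
    obtain ⟨α1, h1⟩ := hev1 b1
    obtain ⟨β2, h2⟩ := hev2 b2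
    obtain ⟨α3, h3⟩ := hev3 b3
    obtain ⟨αs, hα1, hα3⟩ := hdirι α1 α3
    obtain ⟨βs, hβ2, hβ0'⟩ := hdirκ β2 β0
    refine ⟨(αs, βs), ?_⟩
    rintro ⟨α, β⟩ hab
    have hα : αs ≤ α := hab.1
    have hβ : βs ≤ β := hab.2
    have key1 : |y β - ly| * v ≤ z0 γ0 := by
      have h := hβ0 β (le_trans hβ0' hβ)
      rw [sub_zero] at h
      exact (le_abs_self _).trans h
    have key1' : |x α - lx| * (|ly| * u) ≤ t1 b1 := by
      have h := h1 α (le_trans hα1 hα)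
      rw [sub_zero] at h
      exact (le_abs_self _).trans h
    have key2 : |y β - ly| * u ≤ z2 b2 := by
      have h := h2 β (le_trans hβ2 hβ)
      rw [sub_zero] at h
      exact (le_abs_self _).trans h
    have key3 : |x α - lx| * (z0 γ0 * w) ≤ t3 b3 := by
      have h := h3 α (le_trans hα3 hα)
      rw [sub_zero] at h
      exact (le_abs_self _).trans h
    show |(|x α * y β - lx * ly| * u) - 0| ≤ t1 b1 + (t2 b2 + t3 b3)
    rw [sub_zero, abs_of_nonneg (fmul_nonneg (abs_nonneg _) hu)]
    have decomp : x α * y β - lx * ly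
        = (x α - lx) * ly + (lx * (y β - ly) + (x α - lx) * (y β - ly)) := by
      noncomm_ring
    have absineq : |x α * y β - lx * ly|
        ≤ |x α - lx| * |ly| + (|lx| * |y β - ly| + |x α - lx| * |y β - ly|) := by
      rw [decomp]
      exact (abs_add_le _ _).trans (add_le_add (fabs_mul_le _ _)
        ((abs_add_le _ _).trans (add_le_add (fabs_mul_le _ _) (fabs_mul_le _ _))))
    calc |x α * y β - lx * ly| * u
        ≤ (|x α - lx| * |ly| + (|lx| * |y β - ly| + |x α - lx| * |y β - ly|)) * u :=
          fmul_le_right absineq hu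
      _ = |x α - lx| * |ly| * u + (|lx| * |y β - ly| * u + |x α - lx| * |y β - ly| * u) := by
          rw [add_mul, add_mul]
      _ ≤ t1 b1 + (t2 b2 + t3 b3) := by
          refine add_le_add ?_ (add_le_add ?_ ?_)
          · rw [mul_assoc]; exact key1'
          · rw [mul_assoc]; exact fmul_le_left key2 (abs_nonneg lx)
          · rw [huvw]
            calc |x α - lx| * |y β - ly| * (v * w)
                = |x α - lx| * (|y β - ly| * v) * w := by noncomm_ring
              _ ≤ |x α - lx| * z0 γ0 * w :=
                  fmul_le_right (fmul_le_left key1 (abs_nonneg _)) hw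
              _ = |x α - lx| * (z0 γ0 * w) := mul_assoc _ _ _
              _ ≤ t3 b3 := key3
end

section
/- Let E be an infinite distributive f-algebra with multiplicative unit e and let (x_n) be a decreasing sequence in E. Then x_n mo-converges to 0 if and only if |x_n|(u ∧ e) order converges to 0 for all u ∈ E₊. -/
universe u v w

variable {E : Type u}

section Helpers

variable {E : Type u} [FAlgebra E]

instance (priority := 100) FAlgebra.toCovariant : CovariantClass E E (· + ·) (· ≤ ·) :=
  ⟨fun c a b h => FAlgebra.add_le_add_left' a b h c⟩

instance (priority := 100) FAlgebra.toCovariantSwap :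
    CovariantClass E E (Function.swap (· + ·)) (· ≤ ·) :=
  ⟨fun c a b h => by
    simpa [add_comm] using FAlgebra.add_le_add_left' a b h c⟩

lemma fsmul_mono {r : ℝ} (hr : 0 ≤ r) {a b : E} (h : a ≤ b) : r • a ≤ r • b := by
  have h1 : (0 : E) ≤ r • (b - a) := FAlgebra.smul_nonneg' r (b - a) hr (sub_nonneg.2 h)
  rw [smul_sub] at h1
  exact sub_nonneg.1 h1

lemma fmul_le_mul_left {a b c : E} (ha : 0 ≤ a) (h : b ≤ c) : a * b ≤ a * c := by
  have h1 : (0 : E) ≤ a * (c - b) := FAlgebra.mul_nonneg' a (c - b) ha (sub_nonneg.2 h)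
  rw [mul_sub] at h1
  exact sub_nonneg.1 h1

lemma fmul_le_mul_right {a b c : E} (ha : 0 ≤ a) (h : b ≤ c) : b * a ≤ c * a := by
  have h1 : (0 : E) ≤ (c - b) * a := FAlgebra.mul_nonneg' (c - b) a (sub_nonneg.2 h) ha
  rw [sub_mul] at h1
  exact sub_nonneg.1 h1

lemma fmul_eq_zero_of_inf_zero {a b : E} (ha : 0 ≤ a) (hb : 0 ≤ b) (h : a ⊓ b = 0) :
    a * b = 0 := by
  have h1 : (a * b) ⊓ b = 0 := (FAlgebra.f_inf a b b h hb).1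
  have h2 := (FAlgebra.f_inf b (a * b) a (by rwa [inf_comm]) ha).2
  simpa using h2

lemma fabs_of_nonneg {a : E} (ha : 0 ≤ a) : |a| = a := by
  rw [abs]
  exact sup_eq_left.2 (le_trans (neg_nonpos.2 ha) ha)

lemma fneg_le_abs (a : E) : -a ≤ |a| := by
  rw [abs]; exact le_sup_right

lemma fneg_le_neg {a b : E} (h : a ≤ b) : -b ≤ -a := by
  have h1 : -b + 0 ≤ -b + (b - a) := add_le_add_right (sub_nonneg.2 h) (-b)
  calc -b = -b + 0 := (add_zero _).symm
    _ ≤ -b + (b - a) := h1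
    _ = -a := by abel

lemma unit_nonneg {e : E} (he : IsMulUnit e) : (0 : E) ≤ e := by
  have hpm : e⁺ ⊓ e⁻ = 0 := posPart_inf_negPart_eq_zero e
  have h1 : (e⁺ * e⁻) ⊓ e⁻ = 0 := (FAlgebra.f_inf e⁺ e⁻ e⁻ hpm (negPart_nonneg e)).1
  have h3 : e⁺ = e + e⁻ := sub_eq_iff_eq_add.mp (posPart_sub_negPart e)
  have h2 : e⁻ ≤ e⁺ * e⁻ := by
    have h4 : e⁺ * e⁻ = e⁻ + e⁻ * e⁻ := by rw [h3, add_mul, (he e⁻).1]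
    have h5 : (0 : E) ≤ e⁻ * e⁻ :=
      FAlgebra.mul_nonneg' _ _ (negPart_nonneg e) (negPart_nonneg e)
    rw [h4]
    simpa using add_le_add_left h5 e⁻
  have h6 : e⁻ ≤ 0 := by
    have := le_inf h2 (le_refl e⁻)
    rwa [h1] at this
  have h7 : e⁻ = 0 := le_antisymm h6 (negPart_nonneg e)
  have h8 := posPart_sub_negPart e
  rw [h7, sub_zero] at h8
  rw [← h8]
  exact posPart_nonneg e

lemma fmul_nsmul (n : ℕ) (a b : E) : a * (n • b) = n • (a * b) := by
  induction n with
  | zero => simp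
  | succ k ih => rw [succ_nsmul, succ_nsmul, mul_add, ih]

lemma fnsmul_mul (n : ℕ) (a b : E) : (n • a) * b = n • (a * b) := by
  induction n with
  | zero => simp
  | succ k ih => rw [succ_nsmul, succ_nsmul, add_mul, ih]

lemma fmul_cast_smul (j : ℕ) (a b : E) :
    a * (((j : ℝ) + 1) • b) = ((j : ℝ) + 1) • (a * b) := by
  have hc : ((j : ℝ) + 1) = ((j + 1 : ℕ) : ℝ) := by push_cast; ring
  rw [hc, Nat.cast_smul_eq_nsmul, Nat.cast_smul_eq_nsmul, fmul_nsmul]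

lemma fcast_smul_mul (j : ℕ) (a b : E) :
    (((j : ℝ) + 1) • a) * b = ((j : ℝ) + 1) • (a * b) := by
  have hc : ((j : ℝ) + 1) = ((j + 1 : ℕ) : ℝ) := by push_cast; ring
  rw [hc, Nat.cast_smul_eq_nsmul, Nat.cast_smul_eq_nsmul, fnsmul_mul]

lemma fmul_inv_cast_smul (j : ℕ) (a b : E) :
    a * (((j : ℝ) + 1)⁻¹ • b) = ((j : ℝ) + 1)⁻¹ • (a * b) := by
  have hc : ((j : ℝ) + 1) ≠ 0 := by positivity
  calc a * (((j : ℝ) + 1)⁻¹ • b)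
      = ((j : ℝ) + 1)⁻¹ • (((j : ℝ) + 1) • (a * (((j : ℝ) + 1)⁻¹ • b))) :=
        (inv_smul_smul₀ hc _).symm
    _ = ((j : ℝ) + 1)⁻¹ • (a * (((j : ℝ) + 1) • (((j : ℝ) + 1)⁻¹ • b))) := by
        rw [fmul_cast_smul]
    _ = ((j : ℝ) + 1)⁻¹ • (a * b) := by rw [smul_inv_smul₀ hc]

/-- The key inequality: `u ≤ (1/(j+1)) u² + (j+1) (u ⊓ e)`. -/
lemma key_ineq {e : E} (he : IsMulUnit e) {u : E} (hu : 0 ≤ u) (j : ℕ) :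
    u ≤ ((j : ℝ) + 1)⁻¹ • (u * u) + ((j : ℝ) + 1) • (u ⊓ e) := by
  have he0 : (0 : E) ≤ e := unit_nonneg he
  set c : ℝ := (j : ℝ) + 1 with hc_def
  have hc1 : (1 : ℝ) ≤ c := by simp [hc_def]
  have hc0 : (0 : ℝ) < c := lt_of_lt_of_le one_pos hc1
  have hcne : c ≠ 0 := ne_of_gt hc0
  set v : E := u - c • e with hv_def
  set p : E := v⁺ with hp_def
  set m : E := v⁻ with hm_def
  have hp0 : (0 : E) ≤ p := posPart_nonneg v
  have hm0 : (0 : E) ≤ m := negPart_nonneg v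
  have hmp : m * p = 0 :=
    fmul_eq_zero_of_inf_zero hm0 hp0 (by rw [inf_comm]; exact posPart_inf_negPart_eq_zero v)
  have hpu : p ≤ u := by
    have hv_le : v ≤ u := by
      have : (0 : E) ≤ c • e := FAlgebra.smul_nonneg' c e (le_of_lt hc0) he0
      simpa [hv_def] using sub_le_self u this
    calc p = v ⊔ 0 := posPart_def v
      _ ≤ u ⊔ 0 := sup_le_sup_right hv_le 0
      _ = u := sup_eq_left.2 hu
  -- u * p = p * p + c • p
  have hep : c • e * p = c • p := by
    have := fcast_smul_mul j e p
    rw [(he p).1] at this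
    exact this
  have hvp : v * p = p * p := by
    have hpm' : p - m = v := posPart_sub_negPart v
    calc v * p = (p - m) * p := by rw [hpm']
      _ = p * p - m * p := by rw [sub_mul]
      _ = p * p := by rw [hmp, sub_zero]
  have hup : u * p = p * p + c • p := by
    have : u = v + c • e := by rw [hv_def]; abel
    rw [this, add_mul, hvp, hep]
  -- c • p ≤ u * u
  have hcp : c • p ≤ u * u := by
    have h1 : c • p ≤ u * p := by
      rw [hup]
      have : (0 : E) ≤ p * p := FAlgebra.mul_nonneg' p p hp0 hp0
      simpa using add_le_add_right this (c • p)
    exact le_trans h1 (fmul_le_mul_left hu hpu)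
  have hpcu : p ≤ c⁻¹ • (u * u) := by
    have := fsmul_mono (le_of_lt (inv_pos.2 hc0)) hcp
    rwa [inv_smul_smul₀ hcne] at this
  -- u ⊓ (c • e) ≤ c • (u ⊓ e)
  have hinf : u ⊓ (c • e) ≤ c • (u ⊓ e) := by
    have h1 : c⁻¹ • (u ⊓ c • e) ≤ u ⊓ e := by
      refine le_inf ?_ ?_
      · have h2 : c⁻¹ • (u ⊓ c • e) ≤ c⁻¹ • u :=
          fsmul_mono (le_of_lt (inv_pos.2 hc0)) inf_le_left
        have h3 : c⁻¹ • u ≤ u := by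
          have h4 : (0 : E) ≤ (1 - c⁻¹) • u := by
            refine FAlgebra.smul_nonneg' _ _ ?_ hu
            have : c⁻¹ ≤ 1 := by
              rw [inv_le_one_iff₀]; right; exact hc1
            linarith
          rw [sub_smul, one_smul] at h4
          exact sub_nonneg.1 h4
        exact le_trans h2 h3
      · have h2 : c⁻¹ • (u ⊓ c • e) ≤ c⁻¹ • (c • e) :=
          fsmul_mono (le_of_lt (inv_pos.2 hc0)) inf_le_right
        rwa [inv_smul_smul₀ hcne] at h2
    have h5 := fsmul_mono (le_of_lt hc0) h1
    rwa [smul_inv_smul₀ hcne] at h5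
  -- u - u ⊓ (c • e) = p
  have hsub : u - u ⊓ (c • e) = p := by
    rw [hp_def, hv_def, posPart_def, sub_inf, sub_self, sup_comm]
  calc u = (u - u ⊓ (c • e)) + u ⊓ (c • e) := by abel
    _ = p + u ⊓ (c • e) := by rw [hsub]
    _ ≤ c⁻¹ • (u * u) + c • (u ⊓ e) := add_le_add hpcu hinf

end Helpers

/-- in an Archimedean infinite distributive `f`-algebra with unit `e`,
a decreasing sequence mo-converges to `0` iff `|x_n|(u ⊓ e)` order converges to `0`
for every positive `u`. -/
theorem stmt16 {E : Type u} [FAlgebra E] (har : ArchimedeanVL E) (hd : InfDistrib E)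
    (e : E) (he : IsMulUnit e) (x : ℕ → E)
    (hdec : ∀ n m : ℕ, n ≤ m → x m ≤ x n) :
    MOConvTo x (0 : E) ↔
      ∀ u : E, 0 ≤ u → OrderConvTo (fun n => |x n| * (u ⊓ e)) (0 : E) := by
  have he0 : (0 : E) ≤ e := unit_nonneg he
  constructor
  · intro hmo u hu
    have h := hmo (u ⊓ e) (le_inf hu he0)
    have hfun : (fun a : ℕ => |x a - 0| * (u ⊓ e)) = fun n => |x n| * (u ⊓ e) := by
      funext n; rw [sub_zero]
    rwa [hfun] at h
  · intro h u hu
    obtain ⟨κ₀, P₀, y₀, hne₀, hdir₀, hdec₀, hglb₀, hdom₀⟩ := h e he0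
    have habs : ∀ n : ℕ, |x n| * (e ⊓ e) = |x n| := fun n => by
      rw [inf_idem, (he (|x n|)).2]
    have hxpos : ∀ n, 0 ≤ x n := by
      intro n
      have hlb : ∀ b, -(x n) ≤ y₀ b := by
        intro b
        obtain ⟨n₀, hn₀⟩ := hdom₀ b
        have h1 := hn₀ (max n n₀) (le_max_right _ _)
        simp only [sub_zero, habs, abs_abs] at h1
        have h2 : x (max n n₀) ≤ x n := hdec n _ (le_max_left _ _)
        calc -(x n) ≤ -(x (max n n₀)) := fneg_le_neg h2
          _ ≤ |x (max n n₀)| := fneg_le_abs _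
          _ ≤ y₀ b := h1
      have h3 : -(x n) ≤ 0 := hglb₀.2 (by rintro _ ⟨b, rfl⟩; exact hlb b)
      simpa using h3
    have habs2 : ∀ n, |x n| = x n := fun n => fabs_of_nonneg (hxpos n)
    obtain ⟨κ, P, y, hne, hdir, hydec, hglb, hdom⟩ := h u hu
    have hy0 : ∀ b, (0 : E) ≤ y b := fun b => hglb.1 ⟨b, rfl⟩
    have hue : (0 : E) ≤ u ⊓ e := le_inf hu he0
    have hdom' : ∀ b, ∃ n₀, ∀ n, n₀ ≤ n → x n * (u ⊓ e) ≤ y b := by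
      intro b; obtain ⟨n₀, hn₀⟩ := hdom b
      refine ⟨n₀, fun n hn => ?_⟩
      have h1 := hn₀ n hn
      simp only [sub_zero] at h1
      rwa [habs2, fabs_of_nonneg (FAlgebra.mul_nonneg' _ _ (hxpos n) hue)] at h1
    set X : E := x 0 * (u * u) with hX_def
    have hX : (0 : E) ≤ X :=
      FAlgebra.mul_nonneg' _ _ (hxpos 0) (FAlgebra.mul_nonneg' u u hu hu)
    set g : ℕ → κ → E := fun j b => ((j : ℝ) + 1)⁻¹ • X + ((j : ℝ) + 1) • y b with hg_def
    have hg0 : ∀ j b, (0 : E) ≤ g j b := fun j b =>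
      add_nonneg (FAlgebra.smul_nonneg' _ _ (by positivity) hX)
        (FAlgebra.smul_nonneg' _ _ (by positivity) (hy0 b))
    refine ⟨ULift.{u} ℕ × κ,
      { le := fun p q => p.1.down ≤ q.1.down ∧ P.le p.2 q.2
        le_refl := fun p => ⟨le_refl _, P.le_refl _⟩
        le_trans := fun p q r h1 h2 => ⟨le_trans h1.1 h2.1, P.le_trans _ _ _ h1.2 h2.2⟩ },
      fun p => Finset.inf' (Finset.range (p.1.down + 1)) (by simp) (fun j => g j p.2),
      ⟨(⟨0⟩, Classical.choice hne)⟩, ?_, ?_, ?_, ?_⟩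
    · rintro ⟨⟨k⟩, b⟩ ⟨⟨k'⟩, b'⟩
      obtain ⟨c, hc1, hc2⟩ := hdir b b'
      exact ⟨(⟨max k k'⟩, c), ⟨le_max_left _ _, hc1⟩, ⟨le_max_right _ _, hc2⟩⟩
    · rintro ⟨⟨k⟩, b⟩ ⟨⟨k'⟩, b'⟩ ⟨hk, hb⟩
      refine Finset.le_inf' _ _ (fun j hj => ?_)
      have hk' : k ≤ k' := hk
      have hj' : j < k + 1 := Finset.mem_range.1 hj
      have hjmem : j ∈ Finset.range (k' + 1) := Finset.mem_range.2 (by omega)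
      refine le_trans (Finset.inf'_le _ hjmem) ?_
      exact add_le_add_right (fsmul_mono (by positivity) (hydec _ _ hb)) _
    · constructor
      · rintro _ ⟨p, rfl⟩
        exact Finset.le_inf' _ _ (fun j _ => hg0 j p.2)
      · intro z hz
        have hzk : ∀ k : ℕ, z ≤ ((k : ℝ) + 1)⁻¹ • X := by
          intro k
          have hcne : ((k : ℝ) + 1) ≠ 0 := by positivity
          have hyb : ∀ b, ((k : ℝ) + 1)⁻¹ • (z - ((k : ℝ) + 1)⁻¹ • X) ≤ y b := by
            intro b
            have h1 : z ≤ ((k : ℝ) + 1)⁻¹ • X + ((k : ℝ) + 1) • y b := by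
              refine le_trans (hz ⟨((⟨k⟩ : ULift ℕ), b), rfl⟩) ?_
              exact Finset.inf'_le _ (by simp)
            have h2 : z - ((k : ℝ) + 1)⁻¹ • X ≤ ((k : ℝ) + 1) • y b := by
              rw [sub_le_iff_le_add']
              exact h1
            have h3 := fsmul_mono (by positivity : (0:ℝ) ≤ ((k : ℝ) + 1)⁻¹) h2
            rwa [inv_smul_smul₀ hcne] at h3
          have h4 : ((k : ℝ) + 1)⁻¹ • (z - ((k : ℝ) + 1)⁻¹ • X) ≤ 0 :=
            hglb.2 (by rintro _ ⟨b, rfl⟩; exact hyb b)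
          have h5 := fsmul_mono (by positivity : (0:ℝ) ≤ (k : ℝ) + 1) h4
          rw [smul_inv_smul₀ hcne, smul_zero] at h5
          exact sub_nonpos.1 h5
        exact (har X hX).2 (by rintro _ ⟨k, rfl⟩; exact hzk k)
    · rintro ⟨⟨k⟩, b⟩
      obtain ⟨n₀, hn₀⟩ := hdom' b
      refine ⟨n₀, fun n hn => ?_⟩
      have hxu : (0 : E) ≤ x n * u := FAlgebra.mul_nonneg' _ _ (hxpos n) hu
      simp only [sub_zero]
      rw [habs2 n, fabs_of_nonneg hxu]
      refine Finset.le_inf' _ _ (fun j hj => ?_)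
      have hkey := key_ineq he hu j
      calc x n * u
          ≤ x n * (((j : ℝ) + 1)⁻¹ • (u * u) + ((j : ℝ) + 1) • (u ⊓ e)) :=
            fmul_le_mul_left (hxpos n) hkey
        _ = ((j : ℝ) + 1)⁻¹ • (x n * (u * u)) + ((j : ℝ) + 1) • (x n * (u ⊓ e)) := by
            rw [mul_add, fmul_inv_cast_smul, fmul_cast_smul]
        _ ≤ ((j : ℝ) + 1)⁻¹ • X + ((j : ℝ) + 1) • y b := by
            refine add_le_add (fsmul_mono (by positivity) ?_) (fsmul_mono (by positivity) ?_)
            · exact fmul_le_mul_right (FAlgebra.mul_nonneg' u u hu hu) (hdec 0 n (Nat.zero_le n))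
            · exact hn₀ n hn
end
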